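/- Let μ > 0. There exists a constant c = c(μ) ≥ 1 such that for every x > 1 and every t > 0, writing m = max(t, x) and λ = x − 1, one has c⁻¹ / (m^μ + λ^{2μ}) ≤ ∫_m^∞ s^{−μ−1} e^{−λ²/(2s)} ds ≤ c / (m^μ + λ^{2μ}). -/

import Mathlib

open MeasureTheory Real Set

private lemma aux_meas (μ a : ℝ) :
    AEStronglyMeasurable (fun s : ℝ => s ^ (-μ - 1) * Real.exp (-a / (2 * s)))
      (volume.restrict (Set.Ioi (0:ℝ))) := by
  apply Measurable.aestronglyMeasurable
  fun_prop

private lemma aux_int {μ m a : ℝ} (hμ : 0 < μ) (hm : 0 < m) (ha : 0 ≤ a) :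
    IntegrableOn (fun s : ℝ => s ^ (-μ - 1) * Real.exp (-a / (2 * s))) (Set.Ioi m) := by
  refine (integrableOn_Ioi_rpow_of_lt (show -μ - 1 < -1 by linarith) hm).mono'
    ((aux_meas μ a).mono_measure (Measure.restrict_mono (Set.Ioi_subset_Ioi hm.le) le_rfl)) ?_
  filter_upwards [ae_restrict_mem measurableSet_Ioi] with s hs
  have hs0 : 0 < s := hm.trans hs
  rw [Real.norm_eq_abs, abs_of_nonneg (by positivity)]
  have h1 : Real.exp (-a / (2 * s)) ≤ 1 := by
    rw [Real.exp_le_one_iff, neg_div]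
    have : 0 ≤ a / (2 * s) := by positivity
    linarith
  calc s ^ (-μ - 1) * Real.exp (-a / (2 * s)) ≤ s ^ (-μ - 1) * 1 := by
        gcongr
    _ = s ^ (-μ - 1) := mul_one _

private lemma aux_pow_int {μ m : ℝ} (hμ : 0 < μ) (hm : 0 < m) :
    ∫ s in Set.Ioi m, s ^ (-μ - 1) = m ^ (-μ) / μ := by
  rw [integral_Ioi_rpow_of_lt (show -μ - 1 < -1 by linarith) hm, show -μ - 1 + 1 = -μ by ring]
  field_simp

private lemma aux_exp_le {μ : ℝ} (hμ : 0 < μ) {u : ℝ} (hu : 0 < u) :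
    Real.exp (-u) ≤ (Nat.ceil (μ + 1)).factorial * u ^ (-(μ + 1)) := by
  set K : ℝ := ((Nat.ceil (μ + 1)).factorial : ℝ) with hK
  have hK1 : (1 : ℝ) ≤ K := by
    rw [hK]
    exact_mod_cast Nat.one_le_iff_ne_zero.mpr (Nat.factorial_ne_zero _)
  have key : u ^ (μ + 1) ≤ K * Real.exp u := by
    rcases le_total u 1 with h | h
    · have h1 : u ^ (μ + 1) ≤ 1 := Real.rpow_le_one hu.le h (by linarith)
      have h2 : (1 : ℝ) ≤ Real.exp u := Real.one_le_exp hu.le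
      nlinarith
    · have h2 : u ^ (μ + 1) ≤ u ^ ((Nat.ceil (μ + 1) : ℝ)) :=
        Real.rpow_le_rpow_of_exponent_le h (Nat.le_ceil _)
      rw [Real.rpow_natCast] at h2
      have h3 := Real.pow_div_factorial_le_exp u (by linarith) (Nat.ceil (μ + 1))
      have hKpos : (0 : ℝ) < K := by linarith
      calc u ^ (μ + 1) ≤ u ^ (Nat.ceil (μ + 1)) := h2
        _ ≤ K * Real.exp u := by rw [div_le_iff₀ hKpos] at h3; linarith [h3]
  have hup : 0 < u ^ (μ + 1) := Real.rpow_pos_of_pos hu _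
  rw [Real.exp_neg, Real.rpow_neg hu.le, inv_eq_one_div, inv_eq_one_div, mul_one_div,
    div_le_div_iff₀ (Real.exp_pos u) hup]
  linarith

set_option maxHeartbeats 1000000 in
theorem stmt_10 (μ : ℝ) (hμ : 0 < μ) :
    ∃ c : ℝ, 1 ≤ c ∧ ∀ x t : ℝ, 1 < x → 0 < t →
      c⁻¹ / ((max t x) ^ μ + (x - 1) ^ (2 * μ))
        ≤ (∫ s in Set.Ici (max t x), s ^ (-μ - 1) * Real.exp (-(x - 1) ^ 2 / (2 * s))) ∧
      (∫ s in Set.Ici (max t x), s ^ (-μ - 1) * Real.exp (-(x - 1) ^ 2 / (2 * s)))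
        ≤ c / ((max t x) ^ μ + (x - 1) ^ (2 * μ)) := by
  set K : ℝ := ((Nat.ceil (μ + 1)).factorial : ℝ) with hK
  have hK1 : (1 : ℝ) ≤ K := by
    rw [hK]; exact_mod_cast Nat.one_le_iff_ne_zero.mpr (Nat.factorial_ne_zero _)
  have h2μ : (1 : ℝ) < 2 ^ μ := Real.one_lt_rpow_iff_of_pos (by norm_num) |>.mpr (Or.inl ⟨by norm_num, hμ⟩)
  set c : ℝ := 1 + Real.exp 1 * μ + Real.exp 1 * μ / (2 ^ μ - 1) + 2 / μ + K * 2 ^ (μ + 1) with hc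
  have t1 : 0 < Real.exp 1 * μ := by positivity
  have t2 : 0 < Real.exp 1 * μ / (2 ^ μ - 1) := div_pos t1 (by linarith)
  have t3 : 0 < 2 / μ := by positivity
  have t4 : 0 < K * 2 ^ (μ + 1) := by positivity
  have hc1 : 1 ≤ c := by rw [hc]; linarith
  have hcpos : 0 < c := by linarith
  refine ⟨c, hc1, fun x t hx ht => ?_⟩
  set m : ℝ := max t x with hm_def
  have hm1 : 1 < m := lt_max_iff.mpr (Or.inr hx)
  have hm0 : 0 < m := lt_trans one_pos hm1
  have hxm1 : 0 < x - 1 := by linarith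
  set a : ℝ := (x - 1) ^ 2 with ha_def
  have ha0 : 0 < a := by positivity
  have haμ : (x - 1) ^ (2 * μ) = a ^ μ := by
    rw [ha_def, ← Real.rpow_natCast (x - 1) 2, ← Real.rpow_mul hxm1.le]
    norm_num
  rw [integral_Ici_eq_integral_Ioi, haμ]
  have hD0 : 0 < m ^ μ + a ^ μ := by positivity
  have hint : IntegrableOn (fun s : ℝ => s ^ (-μ - 1) * Real.exp (-a / (2 * s)))
      (Set.Ioi m) := aux_int hμ hm0 ha0.le
  set I : ℝ := ∫ s in Set.Ioi m, s ^ (-μ - 1) * Real.exp (-a / (2 * s)) with hI_def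
  have hI0 : 0 ≤ I := by
    refine setIntegral_nonneg measurableSet_Ioi fun s hs => ?_
    have hs0 : 0 < s := hm0.trans hs
    positivity
  -- upper bound pieces
  have tail_bound : ∀ b : ℝ, 0 < b →
      (∫ s in Set.Ioi b, s ^ (-μ - 1) * Real.exp (-a / (2 * s))) ≤ b ^ (-μ) / μ := by
    intro b hb
    calc (∫ s in Set.Ioi b, s ^ (-μ - 1) * Real.exp (-a / (2 * s)))
        ≤ ∫ s in Set.Ioi b, s ^ (-μ - 1) := by
          refine setIntegral_mono_on (aux_int hμ hb ha0.le)
            (integrableOn_Ioi_rpow_of_lt (show -μ - 1 < -1 by linarith) hb)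
            measurableSet_Ioi fun s hs => ?_
          have hs0 : 0 < s := hb.trans hs
          have h1 : Real.exp (-a / (2 * s)) ≤ 1 := by
            rw [Real.exp_le_one_iff, neg_div]
            have : 0 ≤ a / (2 * s) := by positivity
            linarith
          calc s ^ (-μ - 1) * Real.exp (-a / (2 * s)) ≤ s ^ (-μ - 1) * 1 := by gcongr
            _ = s ^ (-μ - 1) := mul_one _
      _ = b ^ (-μ) / μ := aux_pow_int hμ hb
  have hmm : m ^ μ * m ^ (-μ) = 1 := by
    rw [← Real.rpow_add hm0]; simp
  have haa : a ^ μ * a ^ (-μ) = 1 := by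
    rw [← Real.rpow_add ha0]; simp
  have h1 : m ^ μ * I ≤ 1 / μ := by
    have := tail_bound m hm0
    calc m ^ μ * I ≤ m ^ μ * (m ^ (-μ) / μ) := by
          gcongr
      _ = 1 / μ := by rw [mul_div_assoc'] ; rw [hmm]
  have h2 : a ^ μ * I ≤ 1 / μ + K * 2 ^ (μ + 1) := by
    rcases le_or_gt a m with ham | ham
    · have haμm : a ^ μ ≤ m ^ μ := Real.rpow_le_rpow ha0.le ham hμ.le
      have := mul_le_mul_of_nonneg_right haμm hI0
      linarith
    · have hsplit : I = (∫ s in Set.Ioc m a, s ^ (-μ - 1) * Real.exp (-a / (2 * s)))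
          + (∫ s in Set.Ioi a, s ^ (-μ - 1) * Real.exp (-a / (2 * s))) := by
        rw [hI_def, ← setIntegral_union (Set.Ioc_disjoint_Ioi le_rfl) measurableSet_Ioi
          (hint.mono_set Set.Ioc_subset_Ioi_self) (aux_int hμ (hm0.trans ham) ha0.le),
          Set.Ioc_union_Ioi_eq_Ioi ham.le]
      have htail := tail_bound a ha0
      have hmid_pt : ∀ s ∈ Set.Ioc m a,
          s ^ (-μ - 1) * Real.exp (-a / (2 * s)) ≤ K * 2 ^ (μ + 1) * a ^ (-(μ + 1)) := by
        intro s hs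
        have hs0 : 0 < s := hm0.trans hs.1
        have hu : 0 < a / (2 * s) := by positivity
        have hexp : Real.exp (-a / (2 * s)) ≤ K * (a / (2 * s)) ^ (-(μ + 1)) := by
          rw [neg_div]; exact aux_exp_le hμ hu
        have e1 : (a / (2 * s)) ^ (-(μ + 1)) = (2 * s) ^ (μ + 1) * a ^ (-(μ + 1)) := by
          rw [Real.rpow_neg (by positivity), Real.div_rpow ha0.le (by positivity),
            Real.rpow_neg ha0.le]
          field_simp
        have e2 : (2 * s : ℝ) ^ (μ + 1) = 2 ^ (μ + 1) * s ^ (μ + 1) :=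
          Real.mul_rpow (by norm_num) hs0.le
        have e3 : s ^ (-μ - 1) * s ^ (μ + 1) = 1 := by
          rw [← Real.rpow_add hs0]; norm_num
        calc s ^ (-μ - 1) * Real.exp (-a / (2 * s))
            ≤ s ^ (-μ - 1) * (K * (a / (2 * s)) ^ (-(μ + 1))) := by
              gcongr
          _ = K * 2 ^ (μ + 1) * a ^ (-(μ + 1)) := by
              rw [e1, e2]
              linear_combination (K * 2 ^ (μ + 1) * a ^ (-(μ + 1))) * e3
      have hmid : (∫ s in Set.Ioc m a, s ^ (-μ - 1) * Real.exp (-a / (2 * s)))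
          ≤ K * 2 ^ (μ + 1) * a ^ (-(μ + 1)) * (a - m) := by
        calc (∫ s in Set.Ioc m a, s ^ (-μ - 1) * Real.exp (-a / (2 * s)))
            ≤ ∫ _ in Set.Ioc m a, K * 2 ^ (μ + 1) * a ^ (-(μ + 1)) :=
              setIntegral_mono_on (hint.mono_set Set.Ioc_subset_Ioi_self)
                (integrableOn_const measure_Ioc_lt_top.ne)
                measurableSet_Ioc hmid_pt
          _ = K * 2 ^ (μ + 1) * a ^ (-(μ + 1)) * (a - m) := by
              rw [setIntegral_const, Real.volume_real_Ioc_of_le (by linarith), smul_eq_mul]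
              ring
      have e4 : a ^ μ * a ^ (-(μ + 1)) = a⁻¹ := by
        rw [← Real.rpow_add ha0, show μ + -(μ + 1) = -1 by ring, Real.rpow_neg_one]
      have e5 : a⁻¹ * (a - m) ≤ 1 := by
        rw [inv_mul_le_iff₀ ha0]
        linarith
      have step : a ^ μ * I = a ^ μ * (∫ s in Set.Ioc m a, s ^ (-μ - 1) * Real.exp (-a / (2 * s)))
          + a ^ μ * (∫ s in Set.Ioi a, s ^ (-μ - 1) * Real.exp (-a / (2 * s))) := by
        rw [hsplit]; ring
      have b1 : a ^ μ * (∫ s in Set.Ioc m a, s ^ (-μ - 1) * Real.exp (-a / (2 * s)))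
          ≤ K * 2 ^ (μ + 1) := by
        calc a ^ μ * (∫ s in Set.Ioc m a, s ^ (-μ - 1) * Real.exp (-a / (2 * s)))
            ≤ a ^ μ * (K * 2 ^ (μ + 1) * a ^ (-(μ + 1)) * (a - m)) := by
              gcongr
          _ = K * 2 ^ (μ + 1) * (a⁻¹ * (a - m)) := by
              rw [← e4]; ring
          _ ≤ K * 2 ^ (μ + 1) * 1 := by gcongr
          _ = K * 2 ^ (μ + 1) := mul_one _
      have b2 : a ^ μ * (∫ s in Set.Ioi a, s ^ (-μ - 1) * Real.exp (-a / (2 * s))) ≤ 1 / μ := by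
        calc a ^ μ * (∫ s in Set.Ioi a, s ^ (-μ - 1) * Real.exp (-a / (2 * s)))
            ≤ a ^ μ * (a ^ (-μ) / μ) := by
              gcongr
          _ = 1 / μ := by rw [mul_div_assoc', haa]
      linarith
  constructor
  · -- lower bound
    rcases le_or_gt a (2 * m) with hcase | hcase
    · have hlow : Real.exp (-1) * (m ^ (-μ) / μ) ≤ I := by
        have hmono : (∫ s in Set.Ioi m, Real.exp (-1) * s ^ (-μ - 1)) ≤ I := by
          refine setIntegral_mono_on
            ((integrableOn_Ioi_rpow_of_lt (show -μ - 1 < -1 by linarith) hm0).const_mul _)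
            hint measurableSet_Ioi fun s hs => ?_
          have hs0 : 0 < s := hm0.trans hs
          rw [mul_comm]
          gcongr s ^ (-μ - 1) * ?_
          rw [Real.exp_le_exp, neg_div, neg_le_neg_iff, div_le_one (by positivity)]
          have hms : m ≤ s := le_of_lt hs
          linarith
        rwa [MeasureTheory.integral_const_mul, aux_pow_int hμ hm0] at hmono
      have hec : Real.exp 1 * μ ≤ c := by rw [hc]; linarith
      calc c⁻¹ / (m ^ μ + a ^ μ) ≤ c⁻¹ / m ^ μ :=
            div_le_div_of_nonneg_left (by positivity) (by positivity)
              (by linarith [Real.rpow_pos_of_pos ha0 μ])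
        _ ≤ Real.exp (-1) * (m ^ (-μ) / μ) := by
            rw [div_le_iff₀ (Real.rpow_pos_of_pos hm0 μ),
              show Real.exp (-1) * (m ^ (-μ) / μ) * m ^ μ
                = (Real.exp 1 * μ)⁻¹ * (m ^ μ * m ^ (-μ)) by
                  rw [Real.exp_neg]; field_simp,
              hmm, mul_one]
            exact inv_anti₀ (by positivity) hec
        _ ≤ I := hlow
    · -- a > 2m : integrate over Ioc (a/2) a
      have ha2m : m < a / 2 := by linarith
      have ha20 : 0 < a / 2 := by linarith
      have hsub : Set.Ioc (a / 2) a ⊆ Set.Ioi m := fun s hs => lt_trans ha2m hs.1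
      have step1 : (∫ s in Set.Ioc (a / 2) a, s ^ (-μ - 1) * Real.exp (-a / (2 * s))) ≤ I := by
        refine setIntegral_mono_set hint ?_ (HasSubset.Subset.eventuallyLE hsub)
        filter_upwards [ae_restrict_mem measurableSet_Ioi] with s hs
        have hs0 : 0 < s := hm0.trans hs
        positivity
      have step2 : Real.exp (-1) * (((a / 2) ^ (-μ) - a ^ (-μ)) / μ)
          ≤ ∫ s in Set.Ioc (a / 2) a, s ^ (-μ - 1) * Real.exp (-a / (2 * s)) := by
        have hmono : (∫ s in Set.Ioc (a / 2) a, Real.exp (-1) * s ^ (-μ - 1))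
            ≤ ∫ s in Set.Ioc (a / 2) a, s ^ (-μ - 1) * Real.exp (-a / (2 * s)) := by
          refine setIntegral_mono_on
            (IntegrableOn.mono_set
              ((integrableOn_Ioi_rpow_of_lt (show -μ - 1 < -1 by linarith) ha20).const_mul _)
              Set.Ioc_subset_Ioi_self)
            (hint.mono_set hsub) measurableSet_Ioc fun s hs => ?_
          have hs0 : 0 < s := ha20.trans hs.1
          rw [mul_comm]
          gcongr s ^ (-μ - 1) * ?_
          rw [Real.exp_le_exp, neg_div, neg_le_neg_iff, div_le_one (by positivity)]
          have := hs.1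
          linarith
        have hval : (∫ s in Set.Ioc (a / 2) a, Real.exp (-1) * s ^ (-μ - 1))
            = Real.exp (-1) * (((a / 2) ^ (-μ) - a ^ (-μ)) / μ) := by
          rw [MeasureTheory.integral_const_mul]
          congr 1
          rw [← intervalIntegral.integral_of_le (by linarith : a / 2 ≤ a),
            integral_rpow (Or.inr ⟨by intro h; linarith [hμ] , by
              rw [Set.uIcc_of_le (by linarith : a / 2 ≤ a)]
              intro h
              exact absurd h.1 (by linarith)⟩),
            show -μ - 1 + 1 = -μ by ring, div_neg, ← neg_div, neg_sub]
        linarith [hmono, hval.ge]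
      have hval2 : (a / 2) ^ (-μ) - a ^ (-μ) = (2 ^ μ - 1) * a ^ (-μ) := by
        rw [Real.div_rpow ha0.le (by norm_num), Real.rpow_neg (by norm_num : (0:ℝ) ≤ 2)]
        field_simp
      have hI2 : Real.exp (-1) * ((2 ^ μ - 1) * a ^ (-μ) / μ) ≤ I := by
        rw [← hval2]; linarith
      have hec : Real.exp 1 * μ / (2 ^ μ - 1) ≤ c := by rw [hc]; linarith
      calc c⁻¹ / (m ^ μ + a ^ μ) ≤ c⁻¹ / a ^ μ :=
            div_le_div_of_nonneg_left (by positivity) (by positivity)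
              (by linarith [Real.rpow_pos_of_pos hm0 μ])
        _ ≤ Real.exp (-1) * ((2 ^ μ - 1) * a ^ (-μ) / μ) := by
            rw [div_le_iff₀ (Real.rpow_pos_of_pos ha0 μ),
              show Real.exp (-1) * ((2 ^ μ - 1) * a ^ (-μ) / μ) * a ^ μ
                = (2 ^ μ - 1) / (Real.exp 1 * μ) * (a ^ μ * a ^ (-μ)) by
                  rw [Real.exp_neg]; field_simp,
              haa, mul_one]
            calc c⁻¹ ≤ (Real.exp 1 * μ / (2 ^ μ - 1))⁻¹ :=
                  inv_anti₀ (by positivity) hec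
              _ = (2 ^ μ - 1) / (Real.exp 1 * μ) := by
                  rw [inv_div]
        _ ≤ I := hI2
  · -- upper bound
    rw [le_div_iff₀ hD0]
    have hcge : 2 / μ + K * 2 ^ (μ + 1) ≤ c := by rw [hc]; linarith
    calc I * (m ^ μ + a ^ μ) = m ^ μ * I + a ^ μ * I := by ring
      _ ≤ 1 / μ + (1 / μ + K * 2 ^ (μ + 1)) := add_le_add h1 h2
      _ = 2 / μ + K * 2 ^ (μ + 1) := by ring
      _ ≤ c := hcge
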